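/- arXiv:2004.09613 — 2 statements merged into one kernel-verified Lean document; each statement's English description precedes it below -/
import Mathlib

section
/- (Variable drift, fixed-target lower bound.) Let k > 0 be a target, let (X_t)_{t∈ℕ} be integrable nonnegative real-valued random variables adapted to a filtration (F_t), with X_0 = x_0 > k deterministic, such that almost surely X_{t+1} ≤ X_t for all t (the process is monotonically decreasing), and let T = inf{t : X_t ≤ k}; assume T is almost surely finite. Suppose there are continuous, monotonically increasing functions c, h : [0, ∞) → (0, ∞) such that for all t, on the event {t < T}, almost surely X_{t+1} ≥ c(X_t) and E[X_t − X_{t+1} | F_t] ≤ h(c(X_t)). Then E[T] ≥ ∫_{k}^{x_0} 1/h(z) dz. -/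
open MeasureTheory

/-- First time at which the process `X` takes a value `≤ k` (`⊤` if this never happens). -/
noncomputable def hitTimeLE {Ω : Type*} (X : ℕ → Ω → ℝ) (k : ℝ) (ω : Ω) : ℕ∞ :=
  sInf {r : ℕ∞ | ∃ t : ℕ, r = (t : ℕ∞) ∧ X t ω ≤ k}

lemma hitTimeLE_lt_iff {Ω : Type*} (X : ℕ → Ω → ℝ) (k : ℝ) (ω : Ω) (t : ℕ) :
    (t : ℕ∞) < hitTimeLE X k ω ↔ ∀ s ≤ t, k < X s ω := by
  constructor
  · intro hlt s hst
    by_contra hle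
    push_neg at hle
    have h1 : hitTimeLE X k ω ≤ (s : ℕ∞) := sInf_le ⟨s, rfl, hle⟩
    exact absurd (h1.trans (by exact_mod_cast hst : (s : ℕ∞) ≤ t)) hlt.not_ge
  · intro hall
    have h1 : (t : ℕ∞) + 1 ≤ hitTimeLE X k ω := by
      apply le_sInf
      rintro r ⟨s, rfl, hXs⟩
      have hts : t < s := by
        by_contra hc
        push_neg at hc
        exact absurd hXs (hall s hc).not_ge
      exact_mod_cast Nat.succ_le_of_lt hts
    calc (t : ℕ∞) < (t : ℕ∞) + 1 := by
          exact lt_of_lt_of_le (by exact_mod_cast Nat.lt_succ_self t) le_rfl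
      _ ≤ _ := h1

lemma enat_coe_eq_tsum (a : ℕ∞) :
    (a : ENNReal) = ∑' n : ℕ, (if (n : ℕ∞) < a then (1 : ENNReal) else 0) := by
  induction a using ENat.recTopCoe with
  | top =>
    simp only [ENat.coe_lt_top, if_true]
    rw [ENNReal.tsum_const_eq_top_of_ne_zero one_ne_zero]
    rfl
  | coe m =>
    have h1 : ∀ n : ℕ, ((n : ℕ∞) < (m : ℕ∞)) ↔ n < m := fun n => Nat.cast_lt
    rw [tsum_eq_sum (s := Finset.range m) (fun n hn => by
      rw [if_neg]
      rw [h1]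
      simpa using hn)]
    rw [Finset.sum_congr rfl (fun n hn => if_pos ((h1 n).2 (Finset.mem_range.1 hn)))]
    simp

/-- Variable drift, fixed-target lower bound: let the adapted integrable nonnegative process
be monotonically decreasing, start at the deterministic value `x0 > k > 0`, and have an a.s.
finite hitting time `T = inf{t : X_t ≤ k}`. If `c, h : [0,∞) → (0,∞)` are continuous and
monotonically increasing with `X_{t+1} ≥ c(X_t)` and `E[X_t − X_{t+1} | F_t] ≤ h(c(X_t))`
before time `T`, then `E[T] ≥ ∫_k^{x0} 1/h(z) dz`. -/
theorem variable_drift_fixed_target_lower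
    {Ω : Type*} {m0 : MeasurableSpace Ω} (μ : Measure Ω) [IsProbabilityMeasure μ]
    (ℱ : Filtration ℕ m0) (X : ℕ → Ω → ℝ)
    (hadapt : Adapted ℱ X) (hint : ∀ t, Integrable (X t) μ)
    (hnonneg : ∀ t ω, 0 ≤ X t ω)
    (hdec : ∀ᵐ ω ∂μ, ∀ t : ℕ, X (t + 1) ω ≤ X t ω)
    (k x0 : ℝ) (hk : 0 < k) (hx0 : k < x0) (hX0 : ∀ ω, X 0 ω = x0)
    (hfin : ∀ᵐ ω ∂μ, hitTimeLE X k ω < ⊤)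
    (c h : ℝ → ℝ)
    (hccont : ContinuousOn c (Set.Ici 0)) (hhcont : ContinuousOn h (Set.Ici 0))
    (hcmono : MonotoneOn c (Set.Ici 0)) (hhmono : MonotoneOn h (Set.Ici 0))
    (hcpos : ∀ z, 0 ≤ z → 0 < c z) (hhpos : ∀ z, 0 ≤ z → 0 < h z)
    (hstep : ∀ t : ℕ, ∀ᵐ ω ∂μ, (t : ℕ∞) < hitTimeLE X k ω →
      c (X t ω) ≤ X (t + 1) ω)
    (hdrift : ∀ t : ℕ, ∀ᵐ ω ∂μ, (t : ℕ∞) < hitTimeLE X k ω →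
      (μ[fun ω' => X t ω' - X (t + 1) ω'|ℱ t]) ω ≤ h (c (X t ω))) :
    ENNReal.ofReal (∫ z in k..x0, 1 / h z)
      ≤ ∫⁻ ω, ((hitTimeLE X k ω : ℕ∞) : ENNReal) ∂μ := by
  -- events
  set A : ℕ → Set Ω := fun t => {ω | (t : ℕ∞) < hitTimeLE X k ω} with hA_def
  have hA_iff : ∀ t ω, ω ∈ A t ↔ ∀ s ≤ t, k < X s ω := by
    intro t ω; exact hitTimeLE_lt_iff X k ω t
  have hXmeas : ∀ t, Measurable (X t) := fun t =>
    (hadapt t).mono (ℱ.le t) le_rfl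
  have hAmeasF : ∀ t, MeasurableSet[ℱ t] (A t) := by
    intro t
    have : A t = ⋂ s ∈ Set.Iic t, {ω | k < X s ω} := by
      ext ω; simp [hA_iff t ω, Set.mem_Iic]
    rw [this]
    refine MeasurableSet.biInter (Set.to_countable _) (fun s hs => ?_)
    have hXsm : Measurable[ℱ t] (X s) := (hadapt s).mono (ℱ.mono hs) le_rfl
    exact hXsm measurableSet_Ioi
  have hAmeas : ∀ t, MeasurableSet (A t) := fun t => ℱ.le t _ (hAmeasF t)
  -- reduce RHS
  have hS : ∫⁻ ω, ((hitTimeLE X k ω : ℕ∞) : ENNReal) ∂μ = ∑' t : ℕ, μ (A t) := by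
    have h1 : ∀ ω, ((hitTimeLE X k ω : ℕ∞) : ENNReal)
        = ∑' n : ℕ, Set.indicator (A n) (fun _ => (1 : ENNReal)) ω := by
      intro ω
      rw [enat_coe_eq_tsum]
      congr 1; funext n
      by_cases hn : ω ∈ A n
      · rw [Set.indicator_of_mem hn]; exact if_pos hn
      · rw [Set.indicator_of_notMem hn]; exact if_neg hn
    calc ∫⁻ ω, ((hitTimeLE X k ω : ℕ∞) : ENNReal) ∂μ
        = ∫⁻ ω, ∑' n : ℕ, Set.indicator (A n) (fun _ => (1 : ENNReal)) ω ∂μ := by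
          exact lintegral_congr h1
      _ = ∑' n : ℕ, ∫⁻ ω, Set.indicator (A n) (fun _ => (1 : ENNReal)) ω ∂μ :=
          lintegral_tsum (fun n => (measurable_one.indicator (hAmeas n)).aemeasurable)
      _ = ∑' n : ℕ, μ (A n) := by
          congr 1; funext n
          exact lintegral_indicator_one (hAmeas n)
  -- the potential function
  set g : ℝ → ℝ := fun x => ∫ z in k..(max x k), (h z)⁻¹ with hg_def
  have hcont_inv : ContinuousOn (fun z => (h z)⁻¹) (Set.Ici 0) :=
    hhcont.inv₀ (fun z hz => (hhpos z hz).ne')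
  have hII : ∀ a b : ℝ, 0 ≤ a → 0 ≤ b →
      IntervalIntegrable (fun z => (h z)⁻¹) MeasureTheory.volume a b := by
    intro a b ha hb
    refine (hcont_inv.mono ?_).intervalIntegrable
    intro z hz
    exact le_trans (le_min ha hb) hz.1
  have hinv_nonneg : ∀ z, 0 ≤ z → 0 ≤ (h z)⁻¹ := fun z hz =>
    (inv_pos.2 (hhpos z hz)).le
  have hgdiff : ∀ x y : ℝ, x ≤ y → g y - g x = ∫ z in (max x k)..(max y k), (h z)⁻¹ := by
    intro x y hxy
    rw [hg_def]
    exact intervalIntegral.integral_interval_sub_left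
      (hII k (max y k) hk.le (le_trans hk.le (le_max_right _ _)))
      (hII k (max x k) hk.le (le_trans hk.le (le_max_right _ _)))
  have hgmono : Monotone g := by
    intro x y hxy
    have h1 := hgdiff x y hxy
    have h2 : 0 ≤ ∫ z in (max x k)..(max y k), (h z)⁻¹ := by
      apply intervalIntegral.integral_nonneg (max_le_max hxy le_rfl)
      intro u hu
      exact hinv_nonneg u (le_trans (le_trans hk.le (le_max_right x k)) hu.1)
    linarith
  have hg0 : ∀ x, x ≤ k → g x = 0 := by
    intro x hx
    rw [hg_def]
    simp [max_eq_right hx]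
  have hgnn : ∀ x, 0 ≤ g x := by
    intro x
    rcases le_total x k with hx | hx
    · rw [hg0 x hx]
    · rw [← hg0 k le_rfl]; exact hgmono hx
  have hgmeas : Measurable g := hgmono.measurable
  -- the key pathwise estimate
  have hkey : ∀ a b : ℝ, k < a → b ≤ a → c a ≤ b →
      g a - g b ≤ (a - b) * (h (c a))⁻¹ := by
    intro a b hka hba hcb
    have ha0 : (0:ℝ) ≤ a := le_trans hk.le hka.le
    have hca_pos : 0 < c a := hcpos a ha0
    have hb0 : (0:ℝ) ≤ b := le_trans hca_pos.le hcb
    set b' := max b k with hb'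
    have hcb' : c a ≤ b' := le_trans hcb (le_max_left _ _)
    have hb'k : k ≤ b' := le_max_right _ _
    have hb'a : b' ≤ a := max_le hba hka.le
    have hhca_pos : 0 < h (c a) := hhpos _ hca_pos.le
    have h1 : g a - g b = ∫ z in b'..a, (h z)⁻¹ := by
      have := hgdiff b a hba
      rwa [max_eq_left hka.le] at this
    have h2 : (∫ z in b'..a, (h z)⁻¹) ≤ ∫ z in b'..a, (h (c a))⁻¹ := by
      apply intervalIntegral.integral_mono_on hb'a
        (hII b' a (le_trans hk.le hb'k) ha0) intervalIntegrable_const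
      intro z hz
      have hz0 : (0:ℝ) ≤ z := le_trans (le_trans hk.le hb'k) hz.1
      have : h (c a) ≤ h z := hhmono hca_pos.le hz0 (le_trans hcb' hz.1)
      exact inv_anti₀ hhca_pos this
    have h3 : (∫ z in b'..a, (h (c a))⁻¹) = (a - b') * (h (c a))⁻¹ := by
      simp [intervalIntegral.integral_const, smul_eq_mul]
    have h4 : (a - b') * (h (c a))⁻¹ ≤ (a - b) * (h (c a))⁻¹ := by
      apply mul_le_mul_of_nonneg_right _ (inv_pos.2 hhca_pos).le
      have : b ≤ b' := le_max_left _ _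
      linarith
    linarith
  -- process-level objects
  set Y : ℕ → Ω → ℝ := fun t ω => g (X t ω) with hY_def
  have hXle : ∀ᵐ ω ∂μ, ∀ t, X t ω ≤ x0 := by
    filter_upwards [hdec] with ω hω t
    have hanti : Antitone fun s => X s ω := antitone_nat_of_succ_le hω
    calc X t ω ≤ X 0 ω := hanti (Nat.zero_le t)
      _ = x0 := hX0 ω
  have hYmeas : ∀ t, Measurable (Y t) := fun t => hgmeas.comp (hXmeas t)
  have hYint : ∀ t, Integrable (Y t) μ := by
    intro t
    apply Integrable.mono' (integrable_const (g x0)) (hYmeas t).aestronglyMeasurable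
    filter_upwards [hXle] with ω hω
    rw [Real.norm_eq_abs, abs_of_nonneg (hgnn _)]
    exact hgmono (hω t)
  -- the weight function
  set φ : ℝ → ℝ := fun z => (h (c (max z 0)))⁻¹ with hφ_def
  have hhc_pos : ∀ z : ℝ, 0 ≤ z → 0 < h (c z) := fun z hz => hhpos _ (hcpos z hz).le
  have hφ_anti : Antitone φ := by
    intro z₁ z₂ h12
    have h1 : (0:ℝ) ≤ max z₁ 0 := le_max_right _ _
    have h2 : (0:ℝ) ≤ max z₂ 0 := le_max_right _ _
    have h3 : c (max z₁ 0) ≤ c (max z₂ 0) := hcmono h1 h2 (max_le_max h12 le_rfl)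
    have h4 : h (c (max z₁ 0)) ≤ h (c (max z₂ 0)) :=
      hhmono (hcpos _ h1).le (hcpos _ h2).le h3
    exact inv_anti₀ (hhc_pos _ h1) h4
  have hφ_eq : ∀ t ω, φ (X t ω) = (h (c (X t ω)))⁻¹ := by
    intro t ω; rw [hφ_def]; simp only [max_eq_left (hnonneg t ω)]
  have hφ_pos : ∀ z : ℝ, 0 < φ z := by
    intro z
    exact inv_pos.2 (hhc_pos _ (le_max_right _ _))
  have hφ_bdd : ∀ z : ℝ, 0 ≤ z → φ z ≤ (h (c 0))⁻¹ := by
    intro z hz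
    have h1 : φ z ≤ φ 0 := hφ_anti hz
    rw [hφ_def] at h1
    simpa using h1
  -- per-step estimate
  have hint_step : ∀ t : ℕ, (∫ ω, (Y t ω - Y (t+1) ω) ∂μ) ≤ (μ (A t)).toReal := by
    intro t
    set D : Ω → ℝ := fun ω => Y t ω - Y (t+1) ω with hD_def
    set G : Ω → ℝ := fun ω => X t ω - X (t+1) ω with hG_def
    set F : Ω → ℝ := fun ω => φ (X t ω) with hF_def
    have hDint : Integrable D μ := (hYint t).sub (hYint (t+1))
    have hGint : Integrable G μ := (hint t).sub (hint (t+1))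
    have hFmeasF : StronglyMeasurable[ℱ t] F :=
      (hφ_anti.measurable.comp (hadapt t)).stronglyMeasurable
    have hFGint : Integrable (F * G) μ := by
      apply Integrable.bdd_mul (c := (h (c 0))⁻¹) hGint
        ((hFmeasF.mono (ℱ.le t)).aestronglyMeasurable)
      refine Filter.Eventually.of_forall (fun ω => ?_)
      rw [Real.norm_eq_abs, abs_of_pos (hφ_pos _)]
      exact hφ_bdd _ (hnonneg t ω)
    -- the complementary zero and main pathwise bound
    have hD_nonpos_off : ∀ᵐ ω ∂μ, ω ∉ A t → D ω = 0 := by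
      filter_upwards [hdec] with ω hdecω hω
      have hanti : Antitone fun s => X s ω := antitone_nat_of_succ_le hdecω
      rw [hA_iff] at hω
      push_neg at hω
      obtain ⟨s, hst, hXs⟩ := hω
      have h1 : X t ω ≤ k := le_trans (hanti hst) hXs
      have h2 : X (t+1) ω ≤ k := le_trans (hanti (Nat.le_succ t)) h1
      rw [hD_def]
      simp only [hY_def, hg0 _ h1, hg0 _ h2, sub_self]
    have hD_le : ∀ᵐ ω ∂μ, D ω ≤ (F * G) ω := by
      filter_upwards [hdec, hstep t, hD_nonpos_off] with ω hdecω hstepω hoffω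
      by_cases hω : ω ∈ A t
      · have hkt : k < X t ω := (hA_iff t ω).1 hω t le_rfl
        have hc1 : c (X t ω) ≤ X (t+1) ω := hstepω hω
        have := hkey (X t ω) (X (t+1) ω) hkt (hdecω t) hc1
        calc D ω ≤ (X t ω - X (t+1) ω) * (h (c (X t ω)))⁻¹ := this
          _ = (F * G) ω := by
              simp only [Pi.mul_apply, hF_def, hG_def, hφ_eq t ω]; ring
      · rw [hoffω hω]
        have h1 : 0 < F ω := hφ_pos _
        have h2 : 0 ≤ G ω := sub_nonneg.2 (hdecω t)
        exact mul_nonneg h1.le h2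
    -- conditional expectation bound on A t
    have hce1 : μ[D|ℱ t] ≤ᵐ[μ] μ[F * G|ℱ t] := condExp_mono hDint hFGint hD_le
    have hce2 : μ[F * G|ℱ t] =ᵐ[μ] F * μ[G|ℱ t] :=
      condExp_mul_of_stronglyMeasurable_left hFmeasF hFGint hGint
    have hce3 : ∀ᵐ ω ∂μ, ω ∈ A t → (μ[D|ℱ t]) ω ≤ 1 := by
      filter_upwards [hce1, hce2, hdrift t] with ω h1 h2 h3 hω
      have hd : (μ[G|ℱ t]) ω ≤ h (c (X t ω)) := h3 hω
      have hF_nonneg : 0 ≤ F ω := (hφ_pos _).le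
      calc (μ[D|ℱ t]) ω ≤ (μ[F * G|ℱ t]) ω := h1
        _ = F ω * (μ[G|ℱ t]) ω := h2
        _ ≤ F ω * h (c (X t ω)) := mul_le_mul_of_nonneg_left hd hF_nonneg
        _ = 1 := by
            show φ (X t ω) * h (c (X t ω)) = 1
            rw [hφ_eq t ω]
            exact inv_mul_cancel₀ (hhc_pos _ (hnonneg t ω)).ne'
    -- integrate
    have hsplit : (∫ ω, D ω ∂μ)
        = (∫ ω in A t, D ω ∂μ) + ∫ ω in (A t)ᶜ, D ω ∂μ :=
      (integral_add_compl (hAmeas t) hDint).symm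
    have hzero : (∫ ω in (A t)ᶜ, D ω ∂μ) = 0 := by
      apply integral_eq_zero_of_ae
      have h0 : ∀ᵐ ω ∂μ.restrict (A t)ᶜ, D ω = 0 := by
        rw [ae_restrict_iff' (hAmeas t).compl]
        filter_upwards [hD_nonpos_off] with ω hω hmem
        exact hω hmem
      filter_upwards [h0] with ω hω
      simpa using hω
    have hmain : (∫ ω in A t, D ω ∂μ) ≤ (μ (A t)).toReal := by
      rw [← setIntegral_condExp (ℱ.le t) hDint (hAmeasF t)]
      calc (∫ ω in A t, (μ[D|ℱ t]) ω ∂μ) ≤ ∫ _ω in A t, (1:ℝ) ∂μ := by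
            apply integral_mono_ae integrable_condExp.integrableOn
              (integrable_const 1).integrableOn
            rw [Filter.EventuallyLE, ae_restrict_iff' (hAmeas t)]
            filter_upwards [hce3] with ω hω hmem
            exact hω hmem
        _ = (μ (A t)).toReal := by simp [Measure.real]
    rw [hsplit, hzero, add_zero] at *
    exact hmain
  -- telescoping
  have hY0 : (∫ ω, Y 0 ω ∂μ) = g x0 := by
    have : ∀ ω, Y 0 ω = g x0 := fun ω => by rw [hY_def]; simp [hX0 ω]
    rw [integral_congr_ae (Filter.Eventually.of_forall this)]
    simp
  have htel : ∀ n : ℕ, g x0 - (∫ ω, Y n ω ∂μ)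
      ≤ ∑ t ∈ Finset.range n, (μ (A t)).toReal := by
    intro n
    have h1 : ∀ t : ℕ, (∫ ω, (Y t ω - Y (t+1) ω) ∂μ)
        = (∫ ω, Y t ω ∂μ) - ∫ ω, Y (t+1) ω ∂μ := fun t =>
      integral_sub (hYint t) (hYint (t+1))
    have h2 : (∑ t ∈ Finset.range n, ∫ ω, (Y t ω - Y (t+1) ω) ∂μ)
        = (∫ ω, Y 0 ω ∂μ) - ∫ ω, Y n ω ∂μ := by
      rw [Finset.sum_congr rfl (fun t _ => h1 t)]
      exact Finset.sum_range_sub' (fun t => ∫ ω, Y t ω ∂μ) n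
    calc g x0 - (∫ ω, Y n ω ∂μ)
        = ∑ t ∈ Finset.range n, ∫ ω, (Y t ω - Y (t+1) ω) ∂μ := by rw [h2, hY0]
      _ ≤ ∑ t ∈ Finset.range n, (μ (A t)).toReal :=
          Finset.sum_le_sum (fun t _ => hint_step t)
  -- limit of ∫ Y n
  have hYlim : Filter.Tendsto (fun n => ∫ ω, Y n ω ∂μ) Filter.atTop (nhds 0) := by
    have h0 : Filter.Tendsto (fun n => ∫ ω, Y n ω ∂μ) Filter.atTop
        (nhds (∫ _ω, (0:ℝ) ∂μ)) := by
      apply tendsto_integral_of_dominated_convergence (fun _ => g x0)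
        (fun n => (hYmeas n).aestronglyMeasurable) (integrable_const (g x0))
      · intro n
        filter_upwards [hXle] with ω hω
        rw [Real.norm_eq_abs, abs_of_nonneg (hgnn _)]
        exact hgmono (hω n)
      · filter_upwards [hfin, hdec] with ω hfinω hdecω
        have hanti : Antitone fun s => X s ω := antitone_nat_of_succ_le hdecω
        have hne : {r : ℕ∞ | ∃ t : ℕ, r = (t : ℕ∞) ∧ X t ω ≤ k}.Nonempty := by
          by_contra hc
          rw [Set.not_nonempty_iff_eq_empty] at hc
          rw [hitTimeLE, hc, sInf_empty] at hfinω
          exact absurd hfinω (lt_irrefl _)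
        obtain ⟨r, t0, rfl, hXt0⟩ := hne
        apply tendsto_atTop_of_eventually_const (i₀ := t0)
        intro n hn
        exact hg0 _ (le_trans (hanti hn) hXt0)
    simpa using h0
  -- conclusion
  rw [hS]
  by_cases hStop : (∑' t : ℕ, μ (A t)) = ⊤
  · rw [hStop]; exact le_top
  · have hpart : ∀ n : ℕ, (∑ t ∈ Finset.range n, (μ (A t)).toReal)
        ≤ (∑' t : ℕ, μ (A t)).toReal := by
      intro n
      rw [← ENNReal.toReal_sum (fun t _ => (measure_lt_top μ (A t)).ne)]
      exact ENNReal.toReal_mono hStop (ENNReal.sum_le_tsum (Finset.range n))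
    have hgle : g x0 ≤ (∑' t : ℕ, μ (A t)).toReal := by
      have hlim : Filter.Tendsto (fun n => g x0 - ∫ ω, Y n ω ∂μ)
          Filter.atTop (nhds (g x0)) := by
        have := (tendsto_const_nhds (x := g x0) (f := Filter.atTop (α := ℕ))).sub hYlim
        simpa using this
      exact le_of_tendsto hlim (Filter.Eventually.of_forall
        (fun n => le_trans (htel n) (hpart n)))
    have hfinal : ENNReal.ofReal (g x0) ≤ ∑' t : ℕ, μ (A t) := by
      calc ENNReal.ofReal (g x0) ≤ ENNReal.ofReal (∑' t : ℕ, μ (A t)).toReal :=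
            ENNReal.ofReal_le_ofReal hgle
        _ = ∑' t : ℕ, μ (A t) := ENNReal.ofReal_toReal hStop
    have hgx0 : (∫ z in k..x0, 1 / h z) = g x0 := by
      rw [hg_def]
      simp only [max_eq_left hx0.le, one_div]
    rw [hgx0]
    exact hfinal
end

section
/- (Overshoot-aware variable drift, upper bound.) Let k' > 0 be a threshold, let (X_t)_{t∈ℕ} be integrable nonnegative real-valued random variables adapted to a filtration (F_t) with X_0 = x_0 ≥ k' deterministic, and let T = inf{t : X_t < k'}; assume T is almost surely finite and X_T is integrable, where X_T denotes the value of the process at time T. Suppose there is a non-decreasing function h : [k', ∞) → (0, ∞) such that for all t, on the event {t < T}, X_t − E[X_{t+1} | F_t] ≥ h(X_t) almost surely. Then E[T] ≤ (k' − E[X_T]) / h(k') + ∫_{k'}^{x_0} 1/h(z) dz. -/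
open MeasureTheory

/-- First time at which the process `X` takes a value strictly below `k'`
(`⊤` if this never happens). -/
noncomputable def hitTimeLT {Ω : Type*} (X : ℕ → Ω → ℝ) (k' : ℝ) (ω : Ω) : ℕ∞ :=
  sInf {r : ℕ∞ | ∃ t : ℕ, r = (t : ℕ∞) ∧ X t ω < k'}

/-- The value `X_T` of the process at the (a.s. finite) stopping time `T`. -/
noncomputable def stoppedVal {Ω : Type*} (X : ℕ → Ω → ℝ) (T : Ω → ℕ∞) (ω : Ω) : ℝ :=
  X (T ω).toNat ω

section hitAux
variable {Ω : Type*} {X : ℕ → Ω → ℝ} {k' : ℝ} {ω : Ω}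

lemma hitTimeLT_le {t : ℕ} (ht : X t ω < k') : hitTimeLT X k' ω ≤ t :=
  sInf_le ⟨t, rfl, ht⟩

lemma lt_hitTimeLT_iff {n : ℕ} :
    (n : ℕ∞) < hitTimeLT X k' ω ↔ ∀ s ≤ n, k' ≤ X s ω := by
  constructor
  · intro hn s hs
    by_contra hc
    exact absurd ((hitTimeLT_le (lt_of_not_ge hc)).trans (by exact_mod_cast hs))
      (not_le.mpr hn)
  · intro hall
    have h1 : ((n + 1 : ℕ) : ℕ∞) ≤ hitTimeLT X k' ω := by
      apply le_sInf
      rintro r ⟨t, rfl, hlt⟩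
      have ht : ¬ t ≤ n := fun hle => absurd hlt (not_lt.mpr (hall t hle))
      exact_mod_cast Nat.succ_le_of_lt (not_le.mp ht)
    exact lt_of_lt_of_le (by exact_mod_cast Nat.lt_succ_self n) h1

lemma hitTimeLT_exists (hfin : hitTimeLT X k' ω < ⊤) : ∃ t, X t ω < k' := by
  by_contra hc
  push_neg at hc
  have hempty : {r : ℕ∞ | ∃ t : ℕ, r = (t : ℕ∞) ∧ X t ω < k'} = ∅ := by
    ext r; simp only [Set.mem_setOf_eq, Set.mem_empty_iff_false, iff_false]
    rintro ⟨t, rfl, hlt⟩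
    exact absurd hlt (not_lt.mpr (hc t))
  rw [hitTimeLT, hempty, sInf_empty] at hfin
  exact absurd hfin (lt_irrefl _)

lemma hitTimeLT_eq_find (hex : ∃ t, X t ω < k') :
    hitTimeLT X k' ω = (Nat.find hex : ℕ∞) := by
  refine le_antisymm (hitTimeLT_le (Nat.find_spec hex)) ?_
  apply le_sInf
  rintro r ⟨t, rfl, hlt⟩
  exact_mod_cast Nat.find_le hlt

lemma hitTimeLT_spec (hfin : hitTimeLT X k' ω < ⊤) :
    X (hitTimeLT X k' ω).toNat ω < k' := by
  obtain hex := hitTimeLT_exists hfin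
  rw [hitTimeLT_eq_find hex]
  simpa using Nat.find_spec hex

end hitAux

noncomputable def Hfun (k' : ℝ) (h : ℝ → ℝ) : ℝ → ℝ := fun x => h (max k' x)

noncomputable def gfun (k' : ℝ) (h : ℝ → ℝ) : ℝ → ℝ :=
  fun x => ∫ z in (0:ℝ)..x, 1 / Hfun k' h z

section analysis
variable {k' : ℝ} {h : ℝ → ℝ}

lemma Hfun_mono (hmono : MonotoneOn h (Set.Ici k')) : Monotone (Hfun k' h) :=
  fun _ _ hab =>
  hmono (Set.mem_Ici.mpr (le_max_left _ _)) (Set.mem_Ici.mpr (le_max_left _ _))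
    (max_le_max le_rfl hab)

lemma Hfun_pos (hpos : ∀ z, k' ≤ z → 0 < h z) (x : ℝ) : 0 < Hfun k' h x :=
  hpos _ (le_max_left _ _)

lemma Hfun_ge (hmono : MonotoneOn h (Set.Ici k')) (x : ℝ) : h k' ≤ Hfun k' h x :=
  hmono (Set.mem_Ici.mpr le_rfl) (Set.mem_Ici.mpr (le_max_left _ _)) (le_max_left _ _)

lemma Hfun_eq_below {x : ℝ} (hx : x ≤ k') : Hfun k' h x = h k' := by
  rw [Hfun, max_eq_left hx]

lemma Hfun_eq_above {x : ℝ} (hx : k' ≤ x) : Hfun k' h x = h x := by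
  rw [Hfun, max_eq_right hx]

lemma inv_Hfun_antitone (hpos : ∀ z, k' ≤ z → 0 < h z)
    (hmono : MonotoneOn h (Set.Ici k')) : Antitone (fun z => 1 / Hfun k' h z) :=
  fun _ _ hab =>
  one_div_le_one_div_of_le (Hfun_pos hpos _) (Hfun_mono hmono hab)

lemma inv_Hfun_intInt (hpos : ∀ z, k' ≤ z → 0 < h z)
    (hmono : MonotoneOn h (Set.Ici k')) (a b : ℝ) :
    IntervalIntegrable (fun z => 1 / Hfun k' h z) volume a b :=
  (inv_Hfun_antitone hpos hmono).intervalIntegrable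

lemma gfun_sub (hpos : ∀ z, k' ≤ z → 0 < h z) (hmono : MonotoneOn h (Set.Ici k'))
    (x y : ℝ) :
    gfun k' h x - gfun k' h y = ∫ z in y..x, 1 / Hfun k' h z := by
  rw [gfun]
  exact intervalIntegral.integral_interval_sub_left
    (inv_Hfun_intInt hpos hmono 0 x) (inv_Hfun_intInt hpos hmono 0 y)

lemma gfun_key (hpos : ∀ z, k' ≤ z → 0 < h z) (hmono : MonotoneOn h (Set.Ici k'))
    (x y : ℝ) :
    (x - y) / Hfun k' h x ≤ gfun k' h x - gfun k' h y := by
  rw [gfun_sub hpos hmono, div_eq_mul_one_div]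
  rcases le_total y x with hyx | hxy
  · have h1 : ∫ z in y..x, 1 / Hfun k' h x ≤ ∫ z in y..x, 1 / Hfun k' h z := by
      apply intervalIntegral.integral_mono_on hyx intervalIntegrable_const
        (inv_Hfun_intInt hpos hmono y x)
      intro z hz
      exact one_div_le_one_div_of_le (Hfun_pos hpos z) (Hfun_mono hmono hz.2)
    simpa using h1
  · have h1 : ∫ z in x..y, 1 / Hfun k' h z ≤ ∫ z in x..y, 1 / Hfun k' h x := by
      apply intervalIntegral.integral_mono_on hxy (inv_Hfun_intInt hpos hmono x y)
        intervalIntegrable_const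
      intro z hz
      exact one_div_le_one_div_of_le (Hfun_pos hpos x) (Hfun_mono hmono hz.1)
    rw [intervalIntegral.integral_symm x y]
    have h2 : (x - y) * (1 / Hfun k' h x) = -((y - x) * (1 / Hfun k' h x)) := by ring
    rw [h2]
    apply neg_le_neg
    simpa using h1

lemma gfun_mono (hpos : ∀ z, k' ≤ z → 0 < h z) (hmono : MonotoneOn h (Set.Ici k')) :
    Monotone (gfun k' h) := by
  intro a b hab
  have h0 : 0 ≤ gfun k' h b - gfun k' h a := by
    rw [gfun_sub hpos hmono]
    apply intervalIntegral.integral_nonneg hab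
    intro z _
    exact le_of_lt (one_div_pos.mpr (Hfun_pos hpos z))
  linarith

lemma gfun_nonneg (hpos : ∀ z, k' ≤ z → 0 < h z) {x : ℝ} (hx : 0 ≤ x) :
    0 ≤ gfun k' h x := by
  apply intervalIntegral.integral_nonneg hx
  intro z _
  exact le_of_lt (one_div_pos.mpr (Hfun_pos hpos z))

lemma gfun_le (hpos : ∀ z, k' ≤ z → 0 < h z)
    (hmono : MonotoneOn h (Set.Ici k')) {x : ℝ} (hx : 0 ≤ x) :
    gfun k' h x ≤ x / h k' := by
  have h1 : ∫ z in (0:ℝ)..x, 1 / Hfun k' h z ≤ ∫ z in (0:ℝ)..x, 1 / h k' := by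
    apply intervalIntegral.integral_mono_on hx (inv_Hfun_intInt hpos hmono 0 x)
      intervalIntegrable_const
    intro z _
    exact one_div_le_one_div_of_le (hpos _ le_rfl) (Hfun_ge hmono z)
  calc gfun k' h x ≤ ∫ z in (0:ℝ)..x, 1 / h k' := h1
  _ = x / h k' := by
    rw [intervalIntegral.integral_const, smul_eq_mul]
    ring

lemma gfun_below (hk' : 0 < k') {x : ℝ} (hx : x ≤ k') :
    gfun k' h x = x / h k' := by
  have hcong : ∀ z ∈ Set.uIcc (0:ℝ) x, 1 / Hfun k' h z = 1 / h k' := by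
    intro z hz
    rw [Hfun_eq_below]
    rcases le_total (0:ℝ) x with h0 | h0
    · rw [Set.uIcc_of_le h0] at hz
      exact hz.2.trans hx
    · rw [Set.uIcc_of_ge h0] at hz
      exact hz.2.trans hk'.le
  rw [gfun, intervalIntegral.integral_congr hcong, intervalIntegral.integral_const,
    smul_eq_mul]
  ring

lemma gfun_x0 (hk' : 0 < k') (hpos : ∀ z, k' ≤ z → 0 < h z)
    (hmono : MonotoneOn h (Set.Ici k')) {x0 : ℝ} (hx0 : k' ≤ x0) :
    gfun k' h x0 = k' / h k' + ∫ z in k'..x0, 1 / h z := by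
  have hadd : gfun k' h x0 = gfun k' h k' + ∫ z in k'..x0, 1 / Hfun k' h z := by
    rw [gfun, gfun, ← intervalIntegral.integral_add_adjacent_intervals
      (inv_Hfun_intInt hpos hmono 0 k') (inv_Hfun_intInt hpos hmono k' x0)]
  have hcong : ∀ z ∈ Set.uIcc k' x0, 1 / Hfun k' h z = 1 / h z := by
    intro z hz
    rw [Set.uIcc_of_le hx0] at hz
    rw [Hfun_eq_above hz.1]
  rw [hadd, gfun_below hk' le_rfl, intervalIntegral.integral_congr hcong]

end analysis

lemma enn_eq_tsum (a : ℕ∞) :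
    (a : ENNReal) = ∑' t : ℕ, (if (t : ℕ∞) < a then (1:ENNReal) else 0) := by
  cases a with
  | top =>
    have h1 : ∀ t : ℕ, (if (t : ℕ∞) < ⊤ then (1:ENNReal) else 0) = 1 := by
      intro t; simp
    rw [tsum_congr h1, ENNReal.tsum_const_eq_top_of_ne_zero (by simp)]
    rfl
  | coe m =>
    have h1 : ∀ t : ℕ, (if (t : ℕ∞) < (m : ℕ∞) then (1:ENNReal) else 0)
        = if t < m then (1:ENNReal) else 0 := by intro t; simp [Nat.cast_lt]
    rw [tsum_congr h1, tsum_eq_sum (s := Finset.range m)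
      (by intro t ht; simp [Finset.mem_range] at ht; simp [ht]),
      Finset.sum_congr rfl (fun t ht => if_pos (Finset.mem_range.mp ht))]
    simp

/-- Overshoot-aware variable drift, upper bound: if the adapted integrable nonnegative process
starts at the deterministic value `x0 ≥ k' > 0`, its hitting time `T = inf{t : X_t < k'}` is
a.s. finite with `X_T` integrable, and `h : [k',∞) → (0,∞)` is non-decreasing with
`X_t − E[X_{t+1} | F_t] ≥ h(X_t)` before time `T`, then
`E[T] ≤ (k' − E[X_T])/h(k') + ∫_{k'}^{x0} 1/h(z) dz`. -/
theorem overshoot_aware_variable_drift_upper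
    {Ω : Type*} {m0 : MeasurableSpace Ω} (μ : Measure Ω) [IsProbabilityMeasure μ]
    (ℱ : Filtration ℕ m0) (X : ℕ → Ω → ℝ)
    (hadapt : Adapted ℱ X) (hint : ∀ t, Integrable (X t) μ)
    (hnonneg : ∀ t ω, 0 ≤ X t ω)
    (k' x0 : ℝ) (hk' : 0 < k') (hx0 : k' ≤ x0) (hX0 : ∀ ω, X 0 ω = x0)
    (hfin : ∀ᵐ ω ∂μ, hitTimeLT X k' ω < ⊤)
    (hTint : Integrable (stoppedVal X (hitTimeLT X k')) μ)
    (h : ℝ → ℝ) (hpos : ∀ z, k' ≤ z → 0 < h z) (hmono : MonotoneOn h (Set.Ici k'))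
    (hdrift : ∀ t : ℕ, ∀ᵐ ω ∂μ, (t : ℕ∞) < hitTimeLT X k' ω →
      h (X t ω) ≤ X t ω - (μ[X (t + 1)|ℱ t]) ω) :
    ∫⁻ ω, ((hitTimeLT X k' ω : ℕ∞) : ENNReal) ∂μ
      ≤ ENNReal.ofReal ((k' - ∫ ω, stoppedVal X (hitTimeLT X k') ω ∂μ) / h k'
          + ∫ z in k'..x0, 1 / h z) := by
  have hk0 : 0 < h k' := hpos _ le_rfl
  set g : ℝ → ℝ := gfun k' h with hg
  set sv : Ω → ℝ := stoppedVal X (hitTimeLT X k') with hsv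
  set A : ℕ → Set Ω := fun t => {ω | (t : ℕ∞) < hitTimeLT X k' ω} with hA
  -- measurability of X t w.r.t. m0
  have hXm : ∀ t, Measurable (X t) := fun t =>
    (hadapt t).mono (ℱ.le t) le_rfl
  -- measurability of the events A t
  have hAmeasF : ∀ t, MeasurableSet[ℱ t] (A t) := by
    intro t
    have hset : A t = ⋂ s ∈ Set.Iic t, X s ⁻¹' Set.Ici k' := by
      ext ω
      simp only [hA, Set.mem_setOf_eq, lt_hitTimeLT_iff, Set.mem_iInter,
        Set.mem_preimage, Set.mem_Ici, Set.mem_Iic]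
    rw [hset]
    exact MeasurableSet.biInter (Set.to_countable _) fun s hs =>
      (ℱ.mono hs) _ ((hadapt s) measurableSet_Ici)
  have hAmeas : ∀ t, MeasurableSet (A t) := fun t => (ℱ.le t) _ (hAmeasF t)
  -- integrability of g ∘ X t
  have hgXm : ∀ t, Measurable fun ω => g (X t ω) := fun t =>
    ((gfun_mono hpos hmono).measurable).comp (hXm t)
  have hgX : ∀ t, Integrable (fun ω => g (X t ω)) μ := by
    intro t
    refine Integrable.mono ((hint t).div_const (h k')) (hgXm t).aestronglyMeasurable ?_
    filter_upwards with ω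
    rw [Real.norm_eq_abs, Real.norm_eq_abs, abs_of_nonneg (gfun_nonneg hpos (hnonneg t ω)),
      abs_of_nonneg (div_nonneg (hnonneg t ω) hk0.le)]
    exact gfun_le hpos hmono (hnonneg t ω)
  have hdiffInt : ∀ t, Integrable (fun ω => g (X t ω) - g (X (t+1) ω)) μ :=
    fun t => (hgX t).sub (hgX (t+1))
  -- the per-step drift inequality
  have hstep : ∀ t, (μ (A t)).toReal ≤
      ∫ ω, (A t).indicator (fun ω => g (X t ω) - g (X (t+1) ω)) ω ∂μ := by
    intro t
    set c : Ω → ℝ := (A t).indicator (fun ω => 1 / Hfun k' h (X t ω)) with hc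
    have hc_smF : StronglyMeasurable[ℱ t] c :=
      Measurable.stronglyMeasurable
        ((measurable_const.div ((Hfun_mono hmono).measurable.comp
          (hadapt t))).indicator (hAmeasF t))
    have hc_m : Measurable c :=
      (measurable_const.div ((Hfun_mono hmono).measurable.comp (hXm t))).indicator
        (hAmeas t)
    have hc_bdd : ∀ ω, ‖c ω‖ ≤ 1 / h k' := by
      intro ω
      rw [hc]
      by_cases hmem : ω ∈ A t
      · rw [Set.indicator_of_mem hmem, Real.norm_eq_abs,
          abs_of_nonneg (le_of_lt (one_div_pos.mpr (Hfun_pos hpos _)))]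
        exact one_div_le_one_div_of_le hk0 (Hfun_ge hmono _)
      · rw [Set.indicator_of_notMem hmem]
        simp [le_of_lt (one_div_pos.mpr hk0), hk0.le]
    have hcig : ∀ (f : Ω → ℝ), Integrable f μ → Integrable (fun ω => c ω * f ω) μ :=
      fun f hf => hf.bdd_mul hc_m.aestronglyMeasurable (ae_of_all _ hc_bdd)
    have hpull : ∫ ω, c ω * X (t+1) ω ∂μ = ∫ ω, c ω * (μ[X (t+1)|ℱ t]) ω ∂μ := by
      have hmul := condExp_mul_of_stronglyMeasurable_left (μ := μ) hc_smF
        (hcig _ (hint (t+1))) (hint (t+1))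
      calc ∫ ω, c ω * X (t+1) ω ∂μ
          = ∫ ω, (μ[c * X (t+1)|ℱ t]) ω ∂μ := (integral_condExp (ℱ.le t)).symm
        _ = ∫ ω, (c * μ[X (t+1)|ℱ t]) ω ∂μ := integral_congr_ae hmul
        _ = _ := rfl
    have hDint : Integrable (fun ω => X t ω - (μ[X (t+1)|ℱ t]) ω) μ :=
      (hint t).sub integrable_condExp
    have hstep1 : (μ (A t)).toReal ≤ ∫ ω, c ω * (X t ω - (μ[X (t+1)|ℱ t]) ω) ∂μ := by
      have h1 : (μ (A t)).toReal = ∫ ω, (A t).indicator (fun _ => (1:ℝ)) ω ∂μ := by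
        rw [integral_indicator_const (1:ℝ) (hAmeas t)]
        simp
        rfl
      rw [h1]
      apply integral_mono_ae ((integrable_const (1:ℝ)).indicator (hAmeas t))
        (hcig _ hDint)
      filter_upwards [hdrift t] with ω hω
      by_cases hmem : ω ∈ A t
      · rw [Set.indicator_of_mem hmem, hc, Set.indicator_of_mem hmem]
        have hXt : k' ≤ X t ω := (lt_hitTimeLT_iff.mp hmem) t le_rfl
        have hd := hω hmem
        rw [Hfun_eq_above hXt, one_div, inv_mul_eq_div, le_div_iff₀ (hpos _ hXt), one_mul]
        exact hd
      · rw [Set.indicator_of_notMem hmem, hc, Set.indicator_of_notMem hmem, zero_mul]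
    have hstep2 : ∫ ω, c ω * (X t ω - X (t+1) ω) ∂μ
        ≤ ∫ ω, (A t).indicator (fun ω => g (X t ω) - g (X (t+1) ω)) ω ∂μ := by
      apply integral_mono (hcig _ ((hint t).sub (hint (t+1))))
        ((hdiffInt t).indicator (hAmeas t))
      intro ω
      by_cases hmem : ω ∈ A t
      · rw [hc]
        simp only [Set.indicator_of_mem hmem]
        rw [mul_comm, ← div_eq_mul_one_div]
        exact gfun_key hpos hmono _ _
      · rw [hc]
        simp [Set.indicator_of_notMem hmem]
    have hsplit : ∫ ω, c ω * (X t ω - (μ[X (t+1)|ℱ t]) ω) ∂μ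
        = ∫ ω, c ω * (X t ω - X (t+1) ω) ∂μ := by
      have e1 : ∀ (f : Ω → ℝ), (fun ω => c ω * (X t ω - f ω))
          = fun ω => c ω * X t ω - c ω * f ω := by
        intro f; funext ω; ring
      rw [e1, e1, integral_sub (hcig _ (hint t)) (hcig _ integrable_condExp),
        integral_sub (hcig _ (hint t)) (hcig _ (hint (t+1))), hpull]
    linarith
  -- integrability of g ∘ sv
  have hgsv : Integrable (fun ω => g (sv ω)) μ := by
    refine Integrable.mono (hTint.div_const (h k'))
      (((gfun_mono hpos hmono).measurable).comp_aemeasurable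
        hTint.aemeasurable).aestronglyMeasurable ?_
    filter_upwards with ω
    have hsv0 : 0 ≤ sv ω := hnonneg _ ω
    rw [Real.norm_eq_abs, Real.norm_eq_abs, abs_of_nonneg (gfun_nonneg hpos hsv0),
      abs_of_nonneg (div_nonneg hsv0 hk0.le)]
    exact gfun_le hpos hmono hsv0
  -- the truncated expectation of g(X_T)
  set I : ℕ → ℝ := fun n => ∫ ω, ({ω | hitTimeLT X k' ω ≤ (n : ℕ∞)}).indicator
    (fun ω => g (sv ω)) ω ∂μ with hI
  have hcompl : ∀ n : ℕ, {ω | hitTimeLT X k' ω ≤ (n : ℕ∞)} = (A n)ᶜ := by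
    intro n; ext ω; simp [hA, not_lt]
  -- telescoping bound
  have htel : ∀ n, ∑ t ∈ Finset.range n, (μ (A t)).toReal ≤ g x0 - I n := by
    intro n
    have hFint : Integrable (fun ω => ∑ t ∈ Finset.range n,
        (A t).indicator (fun ω => g (X t ω) - g (X (t+1) ω)) ω) μ :=
      integrable_finset_sum _ (fun t _ => (hdiffInt t).indicator (hAmeas t))
    have hsum : ∑ t ∈ Finset.range n, (μ (A t)).toReal
        ≤ ∫ ω, ∑ t ∈ Finset.range n,
            (A t).indicator (fun ω => g (X t ω) - g (X (t+1) ω)) ω ∂μ := by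
      rw [integral_finset_sum _ (fun t _ => (hdiffInt t).indicator (hAmeas t))]
      exact Finset.sum_le_sum fun t _ => hstep t
    have hptwise : ∀ᵐ ω ∂μ, ({ω | hitTimeLT X k' ω ≤ (n:ℕ∞)}).indicator
        (fun ω => g (sv ω)) ω
        ≤ g x0 - ∑ t ∈ Finset.range n,
            (A t).indicator (fun ω => g (X t ω) - g (X (t+1) ω)) ω := by
      filter_upwards [hfin] with ω hω
      by_cases hT : hitTimeLT X k' ω ≤ (n : ℕ∞)
      · set m := (hitTimeLT X k' ω).toNat with hm
        have hTm : hitTimeLT X k' ω = (m : ℕ∞) := (ENat.coe_toNat hω.ne).symm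
        have hmn : m ≤ n := by
          rw [hTm] at hT
          exact_mod_cast hT
        have hz : ∀ t ∈ Finset.range n, t ∉ Finset.range m →
            (A t).indicator (fun ω => g (X t ω) - g (X (t+1) ω)) ω = 0 := by
          intro t _ htm
          simp only [Finset.mem_range, not_lt] at htm
          apply Set.indicator_of_notMem
          intro hmem
          have : (t : ℕ∞) < (m : ℕ∞) := hTm ▸ hmem
          exact absurd (by exact_mod_cast this) (not_lt.mpr htm)
        have hone : ∀ t ∈ Finset.range m,
            (A t).indicator (fun ω => g (X t ω) - g (X (t+1) ω)) ω
            = g (X t ω) - g (X (t+1) ω) := by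
          intro t htm
          apply Set.indicator_of_mem
          show (t : ℕ∞) < hitTimeLT X k' ω
          rw [hTm]
          exact_mod_cast Finset.mem_range.mp htm
        have hsum_eq : ∑ t ∈ Finset.range n,
            (A t).indicator (fun ω => g (X t ω) - g (X (t+1) ω)) ω
            = g (X 0 ω) - g (X m ω) := by
          rw [← Finset.sum_subset (Finset.range_subset_range.mpr hmn) hz,
            Finset.sum_congr rfl hone, Finset.sum_range_sub' (fun i => g (X i ω)) m]
        have hmemT : ω ∈ {ω | hitTimeLT X k' ω ≤ (n:ℕ∞)} := hT
        rw [Set.indicator_of_mem hmemT, hsum_eq, hX0 ω]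
        have : g (sv ω) = g (X m ω) := rfl
        rw [this]
        linarith
      · have hn : (n:ℕ∞) < hitTimeLT X k' ω := not_le.mp hT
        have hone : ∀ t ∈ Finset.range n,
            (A t).indicator (fun ω => g (X t ω) - g (X (t+1) ω)) ω
            = g (X t ω) - g (X (t+1) ω) := by
          intro t htm
          apply Set.indicator_of_mem
          show (t : ℕ∞) < hitTimeLT X k' ω
          refine lt_trans ?_ hn
          exact_mod_cast Finset.mem_range.mp htm
        have hsum_eq : ∑ t ∈ Finset.range n,
            (A t).indicator (fun ω => g (X t ω) - g (X (t+1) ω)) ω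
            = g (X 0 ω) - g (X n ω) := by
          rw [Finset.sum_congr rfl hone, Finset.sum_range_sub' (fun i => g (X i ω)) n]
        have hmemT : ω ∉ {ω | hitTimeLT X k' ω ≤ (n:ℕ∞)} := hT
        rw [Set.indicator_of_notMem hmemT, hsum_eq, hX0 ω]
        have := gfun_nonneg hpos (hnonneg n ω) (k' := k') (h := h)
        linarith
    have hle2 : I n ≤ g x0 - ∫ ω, ∑ t ∈ Finset.range n,
        (A t).indicator (fun ω => g (X t ω) - g (X (t+1) ω)) ω ∂μ := by
      have h2 : I n ≤ ∫ ω, (g x0 - ∑ t ∈ Finset.range n,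
          (A t).indicator (fun ω => g (X t ω) - g (X (t+1) ω)) ω) ∂μ :=
        integral_mono_ae (hgsv.indicator ((hcompl n) ▸ (hAmeas n).compl))
          ((integrable_const (g x0)).sub hFint) hptwise
      have heq2 : ∫ ω, (g x0 - ∑ t ∈ Finset.range n,
          (A t).indicator (fun ω => g (X t ω) - g (X (t+1) ω)) ω) ∂μ
          = g x0 - ∫ ω, ∑ t ∈ Finset.range n,
          (A t).indicator (fun ω => g (X t ω) - g (X (t+1) ω)) ω ∂μ := by
        have := integral_sub (integrable_const (g x0)) hFint
        simpa using this
      rw [heq2] at h2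
      exact h2
    linarith
  -- convergence of I n to ∫ g ∘ sv
  have hIlim : Filter.Tendsto I Filter.atTop (nhds (∫ ω, g (sv ω) ∂μ)) := by
    rw [hI]
    apply tendsto_integral_of_dominated_convergence (fun ω => ‖g (sv ω)‖)
    · intro n
      exact hgsv.aestronglyMeasurable.indicator ((hcompl n) ▸ (hAmeas n).compl)
    · exact hgsv.norm
    · intro n
      filter_upwards with ω
      exact norm_indicator_le_norm_self _ _
    · filter_upwards [hfin] with ω hω
      apply Filter.Tendsto.congr' _ tendsto_const_nhds
      filter_upwards [Filter.eventually_ge_atTop (hitTimeLT X k' ω).toNat] with n hn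
      have hmem : ω ∈ {ω | hitTimeLT X k' ω ≤ (n : ℕ∞)} := by
        have := (ENat.coe_toNat hω.ne).symm
        simp only [Set.mem_setOf_eq]
        rw [this]
        exact_mod_cast hn
      rw [Set.indicator_of_mem hmem]
  -- limit bound for partial sums
  have hbound : ∀ n, ∑ t ∈ Finset.range n, (μ (A t)).toReal
      ≤ g x0 - ∫ ω, g (sv ω) ∂μ := by
    intro n
    refine ge_of_tendsto (Filter.Tendsto.const_sub (g x0) hIlim) ?_
    filter_upwards [Filter.eventually_ge_atTop n] with m hm
    calc ∑ t ∈ Finset.range n, (μ (A t)).toReal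
        ≤ ∑ t ∈ Finset.range m, (μ (A t)).toReal := by
          apply Finset.sum_le_sum_of_subset_of_nonneg
            (Finset.range_subset_range.mpr hm)
          intro i _ _
          exact ENNReal.toReal_nonneg
      _ ≤ g x0 - I m := htel m
  -- identify the limit value with the claimed RHS
  have hval : g x0 - ∫ ω, g (sv ω) ∂μ
      = (k' - ∫ ω, sv ω ∂μ) / h k' + ∫ z in k'..x0, 1 / h z := by
    have hae : (fun ω => g (sv ω)) =ᵐ[μ] fun ω => sv ω / h k' := by
      filter_upwards [hfin] with ω hω
      exact gfun_below hk' (hitTimeLT_spec hω).le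
    rw [integral_congr_ae hae, integral_div, hg, gfun_x0 hk' hpos hmono hx0]
    ring
  -- final assembly
  have hpt : ∀ ω, ((hitTimeLT X k' ω : ℕ∞) : ENNReal)
      = ∑' t : ℕ, (A t).indicator (fun _ => (1:ENNReal)) ω := by
    intro ω
    rw [enn_eq_tsum]
    refine tsum_congr fun t => ?_
    by_cases hmem : ω ∈ A t
    · rw [Set.indicator_of_mem hmem]
      exact if_pos (show (t : ℕ∞) < hitTimeLT X k' ω from hmem)
    · rw [Set.indicator_of_notMem hmem]
      exact if_neg (show ¬ (t : ℕ∞) < hitTimeLT X k' ω from hmem)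
  calc ∫⁻ ω, ((hitTimeLT X k' ω : ℕ∞) : ENNReal) ∂μ
      = ∑' t : ℕ, μ (A t) := by
        rw [lintegral_congr hpt, lintegral_tsum
          (fun t => (measurable_const.indicator (hAmeas t)).aemeasurable)]
        exact tsum_congr fun t => lintegral_indicator_one (hAmeas t)
    _ ≤ ENNReal.ofReal ((k' - ∫ ω, sv ω ∂μ) / h k' + ∫ z in k'..x0, 1 / h z) := by
        rw [ENNReal.tsum_eq_iSup_nat]
        refine iSup_le fun n => ?_
        have heq : ∑ t ∈ Finset.range n, μ (A t)
            = ENNReal.ofReal (∑ t ∈ Finset.range n, (μ (A t)).toReal) := by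
          rw [ENNReal.ofReal_sum_of_nonneg (fun t _ => ENNReal.toReal_nonneg)]
          exact Finset.sum_congr rfl fun t _ =>
            (ENNReal.ofReal_toReal (measure_ne_top μ _)).symm
        rw [heq]
        exact ENNReal.ofReal_le_ofReal (by rw [← hval]; exact hbound n)
end
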